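/- Let n ∈ ℕ, m = ⌈√(n/2)⌉, r = ⌈√(m² − n/2)⌉, a = m + r, b = m − r. Then 0 ≤ m² − n/2 ≤ 2m ≤ 4√(n/2), 0 ≤ r² − (m² − n/2) ≤ 2r ≤ 8 n^{1/4}, and consequently n − 16 n^{1/4} ≤ 2ab ≤ n and b > √(n/2) − 8 n^{1/4}. -/
import Mathlib


set_option maxHeartbeats 1000000 in
/-- Numerical estimates for the parameters of the general construction: with
`m = ⌈√(n/2)⌉`, `r = ⌈√(m² − n/2)⌉`, `a = m + r` and `b = m − r`, we have
`0 ≤ m² − n/2 ≤ 2m ≤ 4√(n/2)`, `0 ≤ r² − (m² − n/2) ≤ 2r ≤ 8 n^{1/4}`,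
`n − 16 n^{1/4} ≤ 2ab ≤ n` and `b > √(n/2) − 8 n^{1/4}`. -/
theorem stmt5 (n : ℕ) (hn : 1 ≤ n) (m r : ℕ) (a b : ℝ)
    (hm : m = ⌈Real.sqrt ((n : ℝ) / 2)⌉₊)
    (hr : r = ⌈Real.sqrt ((m : ℝ) ^ 2 - (n : ℝ) / 2)⌉₊)
    (ha : a = (m : ℝ) + (r : ℝ)) (hb : b = (m : ℝ) - (r : ℝ)) :
    (0 ≤ (m : ℝ) ^ 2 - (n : ℝ) / 2 ∧ (m : ℝ) ^ 2 - (n : ℝ) / 2 ≤ 2 * (m : ℝ) ∧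
      2 * (m : ℝ) ≤ 4 * Real.sqrt ((n : ℝ) / 2)) ∧
    (0 ≤ (r : ℝ) ^ 2 - ((m : ℝ) ^ 2 - (n : ℝ) / 2) ∧
      (r : ℝ) ^ 2 - ((m : ℝ) ^ 2 - (n : ℝ) / 2) ≤ 2 * (r : ℝ) ∧
      2 * (r : ℝ) ≤ 8 * (n : ℝ) ^ ((1 : ℝ) / 4)) ∧
    ((n : ℝ) - 16 * (n : ℝ) ^ ((1 : ℝ) / 4) ≤ 2 * a * b ∧ 2 * a * b ≤ (n : ℝ)) ∧
    b > Real.sqrt ((n : ℝ) / 2) - 8 * (n : ℝ) ^ ((1 : ℝ) / 4) := by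
  set s := Real.sqrt ((n : ℝ) / 2) with hs
  set u := (n : ℝ) ^ ((1 : ℝ) / 4) with hu
  have hn1 : (1:ℝ) ≤ (n:ℝ) := by exact_mod_cast hn
  have hn2 : (0:ℝ) ≤ (n:ℝ) / 2 := by linarith
  have hs0 : 0 ≤ s := Real.sqrt_nonneg _
  have hs2 : s ^ 2 = (n:ℝ) / 2 := Real.sq_sqrt hn2
  have hu0 : 0 ≤ u := Real.rpow_nonneg (by positivity) _
  have hu4 : u ^ (4:ℕ) = (n:ℝ) := by
    rw [hu, ← Real.rpow_natCast ((n:ℝ) ^ ((1:ℝ)/4)) 4, ← Real.rpow_mul (by positivity)]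
    norm_num
  have hu1 : (1:ℝ) ≤ u := by
    by_contra h
    push_neg at h
    have : u ^ (4:ℕ) < 1 := pow_lt_one₀ hu0 h (by norm_num)
    linarith
  have hsu : s ≤ u ^ 2 := by
    nlinarith [sq_nonneg (s - u^2), sq_nonneg (s + u^2)]
  have hsm : s ≤ (m:ℝ) := by rw [hm]; exact Nat.le_ceil _
  have hms : (m:ℝ) < s + 1 := by rw [hm]; exact Nat.ceil_lt_add_one hs0
  have hm0 : (0:ℝ) ≤ (m:ℝ) := Nat.cast_nonneg m
  have A1 : 0 ≤ (m : ℝ) ^ 2 - (n : ℝ) / 2 := by nlinarith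
  have A2 : (m : ℝ) ^ 2 - (n : ℝ) / 2 ≤ 2 * (m : ℝ) := by nlinarith
  have A3 : 2 * (m : ℝ) ≤ 4 * s := by
    rcases le_or_gt s 1 with h | h
    · have : m ≤ 1 := by rw [hm]; exact Nat.ceil_le.mpr (by simpa using h)
      have hm1 : (m:ℝ) ≤ 1 := by exact_mod_cast this
      have : (1:ℝ)/2 ≤ s := by
        rw [hs]
        have : Real.sqrt ((1:ℝ)/4) ≤ Real.sqrt ((n:ℝ)/2) :=
          Real.sqrt_le_sqrt (by linarith)
        calc (1:ℝ)/2 = Real.sqrt ((1:ℝ)/4) := by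
              rw [show (1:ℝ)/4 = ((1:ℝ)/2)^2 by norm_num, Real.sqrt_sq (by norm_num)]
          _ ≤ _ := this
      linarith
    · linarith
  set t := Real.sqrt ((m : ℝ) ^ 2 - (n : ℝ) / 2) with hts
  have ht0 : 0 ≤ t := Real.sqrt_nonneg _
  have ht2 : t ^ 2 = (m:ℝ) ^ 2 - (n:ℝ) / 2 := Real.sq_sqrt A1
  have htr : t ≤ (r:ℝ) := by rw [hr]; exact Nat.le_ceil _
  have hrt : (r:ℝ) < t + 1 := by rw [hr]; exact Nat.ceil_lt_add_one ht0
  have hr0 : (0:ℝ) ≤ (r:ℝ) := Nat.cast_nonneg r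
  have B1 : 0 ≤ (r : ℝ) ^ 2 - ((m : ℝ) ^ 2 - (n : ℝ) / 2) := by
    nlinarith [mul_self_le_mul_self ht0 htr]
  have B2 : (r : ℝ) ^ 2 - ((m : ℝ) ^ 2 - (n : ℝ) / 2) ≤ 2 * (r : ℝ) := by
    have h := mul_le_mul_of_nonneg_left (show (r:ℝ) - t ≤ 1 by linarith)
      (add_nonneg hr0 ht0)
    rw [← ht2]
    calc (r:ℝ)^2 - t^2 = ((r:ℝ) + t) * ((r:ℝ) - t) := by ring
      _ ≤ ((r:ℝ) + t) * 1 := h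
      _ ≤ 2 * (r:ℝ) := by linarith
  have htu : t ≤ 2 * u := by nlinarith [sq_nonneg (t - 2*u), sq_nonneg (t + 2*u)]
  have B3 : 2 * (r : ℝ) ≤ 8 * u := by linarith
  have hru : (r:ℝ) < 8 * u := by linarith
  refine ⟨⟨A1, A2, A3⟩, ⟨B1, B2, B3⟩, ⟨?_, ?_⟩, ?_⟩
  · rw [ha, hb]; nlinarith
  · rw [ha, hb]; nlinarith
  · rw [hb]; linarith
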